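/- Behavior of the areal coordinate: (i) if k̃ ≠ 0 (so ζ > 1), then r(ρ) → 0 as ρ → r_s (through ρ > 0, ρ ≠ r_s); (ii) for every k̃ ∈ ℝ, lim_{ρ→0⁺} r(ρ)/ρ^{(ζ+1)/2} = ζ r_s^{(1−ζ)/2}, and in particular r(ρ) → 0 as ρ → 0⁺. -/

import Mathlib

open Real Filter Topology

/-- Behavior of the areal coordinate: (i) if `k̃ ≠ 0` then `r(ρ) → 0` as `ρ → r_s`
(through `ρ > 0`, `ρ ≠ r_s`); (ii) for every `k̃`,
`lim_{ρ→0⁺} r(ρ)/ρ^{(ζ+1)/2} = ζ r_s^{(1−ζ)/2}`, and in particular `r(ρ) → 0` as `ρ → 0⁺`. -/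
theorem areal_coordinate_behavior
    (rs kt : ℝ) (hrs : 0 < rs)
    (ζ : ℝ) (hζ : ζ = Real.sqrt (1 + 3 * kt ^ 2))
    (r : ℝ → ℝ)
    (hr : ∀ ρ : ℝ, 0 < ρ → ρ ≠ rs → r ρ =
      ζ * rs * |1 - rs / ρ| ^ ((ζ - 1) / 2) /
        |1 - Real.sign (1 - rs / ρ) * |1 - rs / ρ| ^ ζ|) :
    (kt ≠ 0 → Tendsto r (𝓝[Set.Ioi 0 \ {rs}] rs) (𝓝 0)) ∧
      Tendsto (fun ρ : ℝ => r ρ / ρ ^ ((ζ + 1) / 2)) (𝓝[>] 0)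
        (𝓝 (ζ * rs ^ ((1 - ζ) / 2))) ∧
      Tendsto r (𝓝[>] 0) (𝓝 0) := by
  have hζ1 : 1 ≤ ζ := by
    rw [hζ]
    have : (1 : ℝ) = Real.sqrt 1 := (Real.sqrt_one).symm
    rw [this]
    exact Real.sqrt_le_sqrt (by nlinarith [sq_nonneg kt])
  have hζpos : 0 < ζ := lt_of_lt_of_le one_pos hζ1
  set q : ℝ := (ζ - 1) / 2 with hq
  set p : ℝ := (ζ + 1) / 2 with hp
  have hq0 : 0 ≤ q := by rw [hq]; linarith
  have hppos : 0 < p := by positivity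
  -- Part (i)
  have part1 : kt ≠ 0 → Tendsto r (𝓝[Set.Ioi 0 \ {rs}] rs) (𝓝 0) := by
    intro hkt
    have hζgt1 : 1 < ζ := by
      rw [hζ]
      have h1 : (1 : ℝ) < 1 + 3 * kt ^ 2 := by nlinarith [sq_pos_of_ne_zero hkt]
      nlinarith [Real.sq_sqrt (by positivity : (0:ℝ) ≤ 1 + 3 * kt ^ 2),
        Real.sqrt_nonneg (1 + 3 * kt ^ 2)]
    have hqpos : 0 < q := by rw [hq]; linarith
    -- |1 - rs/ρ| → 0
    have habs : Tendsto (fun ρ : ℝ => |1 - rs / ρ|) (𝓝[Set.Ioi 0 \ {rs}] rs) (𝓝 0) := by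
      have h1 : Tendsto (fun ρ : ℝ => 1 - rs / ρ) (𝓝 rs) (𝓝 0) := by
        have : ContinuousAt (fun ρ : ℝ => 1 - rs / ρ) rs :=
          (continuousAt_const.sub (continuousAt_const.div continuousAt_id hrs.ne'))
        have h0 : (1 : ℝ) - rs / rs = 0 := by field_simp; ring
        simpa [h0] using this.tendsto
      have h1' : Tendsto (fun ρ : ℝ => 1 - rs / ρ) (𝓝[Set.Ioi 0 \ {rs}] rs) (𝓝 0) :=
        h1.mono_left nhdsWithin_le_nhds
      have := (continuous_abs.tendsto 0).comp h1'
      simpa [Function.comp_def] using this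
    -- numerator → 0
    have hnum : Tendsto (fun ρ : ℝ => ζ * rs * |1 - rs / ρ| ^ q)
        (𝓝[Set.Ioi 0 \ {rs}] rs) (𝓝 0) := by
      have h2 : Tendsto (fun ρ : ℝ => |1 - rs / ρ| ^ q) (𝓝[Set.Ioi 0 \ {rs}] rs) (𝓝 0) := by
        have hc : ContinuousAt (fun t : ℝ => t ^ q) 0 :=
          Real.continuousAt_rpow_const 0 q (Or.inr hq0)
        have := hc.tendsto.comp habs
        simpa [Function.comp_def, Real.zero_rpow hqpos.ne'] using this
      have := h2.const_mul (ζ * rs)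
      simpa using this
    -- denominator → 1
    have hden : Tendsto (fun ρ : ℝ => |1 - Real.sign (1 - rs / ρ) * |1 - rs / ρ| ^ ζ|)
        (𝓝[Set.Ioi 0 \ {rs}] rs) (𝓝 1) := by
      have h3 : Tendsto (fun ρ : ℝ => Real.sign (1 - rs / ρ) * |1 - rs / ρ| ^ ζ)
          (𝓝[Set.Ioi 0 \ {rs}] rs) (𝓝 0) := by
        have hpow : Tendsto (fun ρ : ℝ => |1 - rs / ρ| ^ ζ)
            (𝓝[Set.Ioi 0 \ {rs}] rs) (𝓝 0) := by
          have hc : ContinuousAt (fun t : ℝ => t ^ ζ) 0 :=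
            Real.continuousAt_rpow_const 0 ζ (Or.inr hζpos.le)
          have := hc.tendsto.comp habs
          simpa [Function.comp_def, Real.zero_rpow hζpos.ne'] using this
        apply squeeze_zero_norm _ hpow
        intro ρ
        have h4 : |Real.sign (1 - rs / ρ)| ≤ 1 := by
          rcases Real.sign_apply_eq (1 - rs / ρ) with h | h | h <;> simp [h]
        calc ‖Real.sign (1 - rs / ρ) * |1 - rs / ρ| ^ ζ‖
            = |Real.sign (1 - rs / ρ)| * abs (|1 - rs / ρ| ^ ζ) := by
              simp [Real.norm_eq_abs, abs_mul]
          _ ≤ 1 * abs (|1 - rs / ρ| ^ ζ) := by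
              apply mul_le_mul_of_nonneg_right h4 (abs_nonneg _)
          _ = |1 - rs / ρ| ^ ζ := by
              rw [one_mul, abs_of_nonneg (Real.rpow_nonneg (abs_nonneg _) _)]
      have h5 : Tendsto (fun ρ : ℝ => 1 - Real.sign (1 - rs / ρ) * |1 - rs / ρ| ^ ζ)
          (𝓝[Set.Ioi 0 \ {rs}] rs) (𝓝 1) := by
        have := (tendsto_const_nhds (x := (1:ℝ))).sub h3
        simpa using this
      have := (continuous_abs.tendsto 1).comp h5
      simpa [Function.comp_def] using this
    have hfull := hnum.div hden one_ne_zero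
    rw [show (0:ℝ)/1 = 0 by norm_num] at hfull
    apply hfull.congr'
    filter_upwards [self_mem_nhdsWithin] with ρ hρ
    exact (hr ρ hρ.1 hρ.2).symm
  -- Eventually on 𝓝[>]0 we have the explicit form
  have hIoo : Set.Ioo (0:ℝ) rs ∈ 𝓝[>] (0:ℝ) :=
    Ioo_mem_nhdsGT_of_mem ⟨le_refl 0, hrs⟩
  have key : ∀ ρ : ℝ, ρ ∈ Set.Ioo (0:ℝ) rs →
      r ρ / ρ ^ p = ζ * rs * (rs - ρ) ^ q / (ρ ^ ζ + (rs - ρ) ^ ζ) := by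
    intro ρ hρ
    obtain ⟨hρ0, hρrs⟩ := hρ
    have hrρ := hr ρ hρ0 (ne_of_lt hρrs)
    have hxneg : 1 - rs / ρ < 0 := by
      rw [sub_neg]
      exact (one_lt_div hρ0).mpr hρrs
    have hsign : Real.sign (1 - rs / ρ) = -1 := Real.sign_of_neg hxneg
    have habsx : |1 - rs / ρ| = (rs - ρ) / ρ := by
      rw [abs_of_neg hxneg]; field_simp; ring
    have hu : (0:ℝ) < (rs - ρ) / ρ := div_pos (by linarith) hρ0
    have hrsρ : (0:ℝ) < rs - ρ := by linarith
    have hdpos : (0:ℝ) < 1 + ((rs - ρ) / ρ) ^ ζ := by positivity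
    rw [hrρ, hsign, habsx]
    rw [show (1 : ℝ) - (-1) * ((rs - ρ) / ρ) ^ ζ = 1 + ((rs - ρ) / ρ) ^ ζ by ring]
    rw [abs_of_pos hdpos]
    rw [Real.div_rpow hrsρ.le hρ0.le, Real.div_rpow hrsρ.le hρ0.le]
    have hρζ : ρ ^ ζ = ρ ^ q * ρ ^ p := by
      rw [← Real.rpow_add hρ0]; congr 1; rw [hq, hp]; ring
    have h1 : ρ ^ q ≠ 0 := (Real.rpow_pos_of_pos hρ0 q).ne'
    have h2 : ρ ^ p ≠ 0 := (Real.rpow_pos_of_pos hρ0 p).ne'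
    have h3 : ρ ^ ζ ≠ 0 := (Real.rpow_pos_of_pos hρ0 ζ).ne'
    field_simp
    rw [hρζ]
  -- limit of the explicit form
  have part2 : Tendsto (fun ρ : ℝ => r ρ / ρ ^ p) (𝓝[>] 0)
      (𝓝 (ζ * rs ^ ((1 - ζ) / 2))) := by
    have hcont : ContinuousAt
        (fun ρ : ℝ => ζ * rs * (rs - ρ) ^ q / (ρ ^ ζ + (rs - ρ) ^ ζ)) 0 := by
      have c1 : ContinuousAt (fun ρ : ℝ => rs - ρ) 0 := by fun_prop
      have c2 : ContinuousAt (fun ρ : ℝ => (rs - ρ) ^ q) 0 :=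
        (Real.continuousAt_rpow_const (rs - 0) q (Or.inl (by simpa using hrs.ne'))).comp c1
      have c3 : ContinuousAt (fun ρ : ℝ => ρ ^ ζ) 0 :=
        Real.continuousAt_rpow_const 0 ζ (Or.inr hζpos.le)
      have c4 : ContinuousAt (fun ρ : ℝ => (rs - ρ) ^ ζ) 0 :=
        (Real.continuousAt_rpow_const (rs - 0) ζ (Or.inl (by simpa using hrs.ne'))).comp c1
      have hden0 : (0:ℝ) ^ ζ + (rs - 0) ^ ζ ≠ 0 := by
        rw [Real.zero_rpow hζpos.ne', zero_add, sub_zero]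
        exact (Real.rpow_pos_of_pos hrs ζ).ne'
      exact (continuousAt_const.mul c2).div (c3.add c4) hden0
    have hval : ζ * rs * (rs - 0) ^ q / ((0:ℝ) ^ ζ + (rs - 0) ^ ζ)
        = ζ * rs ^ ((1 - ζ) / 2) := by
      have h1 : rs * rs ^ q = rs ^ (1 + q) := by
        rw [Real.rpow_add hrs, Real.rpow_one]
      have h2 : rs ^ (1 + q) / rs ^ ζ = rs ^ (1 + q - ζ) := (Real.rpow_sub hrs _ _).symm
      have h3 : 1 + q - ζ = (1 - ζ) / 2 := by rw [hq]; ring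
      rw [sub_zero, Real.zero_rpow hζpos.ne', zero_add, mul_assoc, h1, mul_div_assoc, h2, h3]
    have htend : Tendsto (fun ρ : ℝ => ζ * rs * (rs - ρ) ^ q / (ρ ^ ζ + (rs - ρ) ^ ζ))
        (𝓝[>] 0) (𝓝 (ζ * rs ^ ((1 - ζ) / 2))) := by
      have := hcont.continuousWithinAt (s := Set.Ioi (0:ℝ))
      rw [ContinuousWithinAt] at this
      rw [hval] at this
      exact this
    apply htend.congr'
    filter_upwards [hIoo] with ρ hρ
    exact (key ρ hρ).symm
  refine ⟨part1, part2, ?_⟩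
  -- r → 0 at 0+
  have hpow0 : Tendsto (fun ρ : ℝ => ρ ^ p) (𝓝[>] 0) (𝓝 0) := by
    have hc : ContinuousAt (fun t : ℝ => t ^ p) 0 :=
      Real.continuousAt_rpow_const 0 p (Or.inr hppos.le)
    have := hc.continuousWithinAt (s := Set.Ioi (0:ℝ))
    rw [ContinuousWithinAt] at this
    simpa [Real.zero_rpow hppos.ne'] using this
  have hprod := part2.mul hpow0
  rw [mul_zero] at hprod
  apply hprod.congr'
  filter_upwards [self_mem_nhdsWithin] with ρ hρ
  have h2 : ρ ^ p ≠ 0 := (Real.rpow_pos_of_pos hρ p).ne'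
  field_simp
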